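/- Let Ω ⊆ ℝⁿ be open, let f : Ω → ℝⁿ and A, B, M, N : Ω → ℝ be C¹ with ∂A/∂uⁱ = Σ_k (∂B/∂u^k)(∂f^k/∂uⁱ) and ∂M/∂uⁱ = Σ_k (∂N/∂u^k)(∂f^k/∂uⁱ) on Ω, and set p(u) = (1, u, B(u), N(u), 0), r(u) = (0, f(u), A(u), M(u), 1) ∈ ℝ^{n+4}. If u₀ ∈ Ω, λ₀ ∈ ℝ, and ξ ∈ ℝⁿ satisfy Df(u₀) ξ = λ₀ ξ, then Dr(u₀)[ξ] = λ₀ · Dp(u₀)[ξ]. Consequently, if λ : Ω → ℝ is C¹ and ξ : Ω → ℝⁿ is a field with Df(u) ξ(u) = λ(u) ξ(u) on Ω, then the focal point map F = r − λ·p satisfies DF(u)[ξ(u)] = −(Dλ(u)[ξ(u)]) · p(u): along each rarefaction curve the focal submanifold is tangent to the corresponding line generator of the ruled hypersurface. -/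

import Mathlib

lemma stmt11_key {n : ℕ} (f' : (Fin n → ℝ) →L[ℝ] (Fin n → ℝ)) (A' B' : (Fin n → ℝ) →L[ℝ] ℝ)
    (hAB : ∀ i, A' (Pi.single i 1) = ∑ k, B' (Pi.single k 1) * f' (Pi.single i 1) k)
    (lam₀ : ℝ) (ξ : Fin n → ℝ) (hξ : f' ξ = lam₀ • ξ) :
    A' ξ = lam₀ * B' ξ := by
  have hbasis : ξ = ∑ i, ξ i • (Pi.single i 1 : Fin n → ℝ) := by
    funext j
    simp [Finset.sum_apply, Pi.single_apply]
  have hrep : ∀ (T : (Fin n → ℝ) →L[ℝ] ℝ), T ξ = ∑ i, ξ i * T (Pi.single i 1) := by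
    intro T
    conv_lhs => rw [hbasis]
    simp [smul_eq_mul]
  have hrepf : ∀ k, f' ξ k = ∑ i, ξ i * f' (Pi.single i 1) k := by
    intro k
    conv_lhs => rw [hbasis]
    simp [Finset.sum_apply]
  calc A' ξ = ∑ i, ξ i * A' (Pi.single i 1) := hrep A'
    _ = ∑ i, ∑ k, B' (Pi.single k 1) * (ξ i * f' (Pi.single i 1) k) := by
        simp_rw [hAB, Finset.mul_sum]; congr 1; ext i; congr 1; ext k; ring
    _ = ∑ k, B' (Pi.single k 1) * (∑ i, ξ i * f' (Pi.single i 1) k) := by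
        rw [Finset.sum_comm]; simp_rw [Finset.mul_sum]
    _ = ∑ k, B' (Pi.single k 1) * (lam₀ * ξ k) := by
        simp_rw [← hrepf, hξ]; simp
    _ = lam₀ * ∑ k, ξ k * B' (Pi.single k 1) := by rw [Finset.mul_sum]; congr 1; ext k; ring
    _ = lam₀ * B' ξ := by rw [← hrep B']

/-- Let `f, A, B, M, N` be `C¹` on the open set `Ω` with the
conservation-law relations, and let `p(u) = (1, u, B, N, 0)`,
`r(u) = (0, f, A, M, 1)`. (1) If `Df(u₀)ξ = λ₀ξ` then
`Dr(u₀)[ξ] = λ₀ · Dp(u₀)[ξ]`. (2) Consequently, if `λ : Ω → ℝ` is `C¹` and `ξ`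
is a field of eigenvectors, `Df(u)ξ(u) = λ(u)ξ(u)` on `Ω`, then the focal point
map `F = r − λ·p` satisfies `DF(u)[ξ(u)] = −(Dλ(u)[ξ(u)]) · p(u)`: along each
rarefaction curve the focal submanifold is tangent to the corresponding line
generator of the ruled hypersurface. -/
theorem stmt_11
    (n : ℕ) (Ω : Set (Fin n → ℝ)) (hΩ : IsOpen Ω)
    (f : (Fin n → ℝ) → (Fin n → ℝ))
    (A B M N : (Fin n → ℝ) → ℝ)
    (hf : ContDiffOn ℝ 1 f Ω) (hA : ContDiffOn ℝ 1 A Ω)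
    (hB : ContDiffOn ℝ 1 B Ω) (hM : ContDiffOn ℝ 1 M Ω)
    (hN : ContDiffOn ℝ 1 N Ω)
    (hAB : ∀ u ∈ Ω, ∀ i : Fin n,
      fderiv ℝ A u (Pi.single i 1) =
        ∑ k : Fin n, fderiv ℝ B u (Pi.single k 1) *
          fderiv ℝ (fun x => f x k) u (Pi.single i 1))
    (hMN : ∀ u ∈ Ω, ∀ i : Fin n,
      fderiv ℝ M u (Pi.single i 1) =
        ∑ k : Fin n, fderiv ℝ N u (Pi.single k 1) *
          fderiv ℝ (fun x => f x k) u (Pi.single i 1))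
    (p r : (Fin n → ℝ) → ℝ × (Fin n → ℝ) × ℝ × ℝ × ℝ)
    (hp : ∀ u, p u = (1, u, B u, N u, 0))
    (hr : ∀ u, r u = (0, f u, A u, M u, 1)) :
    (∀ u₀ ∈ Ω, ∀ lam₀ : ℝ, ∀ ξ : Fin n → ℝ,
      fderiv ℝ f u₀ ξ = lam₀ • ξ →
      fderiv ℝ r u₀ ξ = lam₀ • fderiv ℝ p u₀ ξ) ∧
    (∀ lam : (Fin n → ℝ) → ℝ, ∀ ξ : (Fin n → ℝ) → (Fin n → ℝ),
      ContDiffOn ℝ 1 lam Ω →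
      (∀ u ∈ Ω, fderiv ℝ f u (ξ u) = lam u • ξ u) →
      ∀ u ∈ Ω,
        fderiv ℝ (fun x => r x - lam x • p x) u (ξ u) =
          -(fderiv ℝ lam u (ξ u)) • p u) := by
  have hpe : p = fun u => ((1:ℝ), u, B u, N u, (0:ℝ)) := funext hp
  have hre : r = fun u => ((0:ℝ), f u, A u, M u, (1:ℝ)) := funext hr
  -- differentiability at points of Ω
  have hfd : ∀ u ∈ Ω, DifferentiableAt ℝ f u := fun u hu =>
    (hf.differentiableOn one_ne_zero).differentiableAt (hΩ.mem_nhds hu)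
  have hAd : ∀ u ∈ Ω, DifferentiableAt ℝ A u := fun u hu =>
    (hA.differentiableOn one_ne_zero).differentiableAt (hΩ.mem_nhds hu)
  have hBd : ∀ u ∈ Ω, DifferentiableAt ℝ B u := fun u hu =>
    (hB.differentiableOn one_ne_zero).differentiableAt (hΩ.mem_nhds hu)
  have hMd : ∀ u ∈ Ω, DifferentiableAt ℝ M u := fun u hu =>
    (hM.differentiableOn one_ne_zero).differentiableAt (hΩ.mem_nhds hu)
  have hNd : ∀ u ∈ Ω, DifferentiableAt ℝ N u := fun u hu =>
    (hN.differentiableOn one_ne_zero).differentiableAt (hΩ.mem_nhds hu)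
  -- derivatives of p and r
  have hpD : ∀ u ∈ Ω, HasFDerivAt p
      ((0 : (Fin n → ℝ) →L[ℝ] ℝ).prod ((ContinuousLinearMap.id ℝ (Fin n → ℝ)).prod
        ((fderiv ℝ B u).prod ((fderiv ℝ N u).prod 0)))) u := by
    intro u hu
    rw [hpe]
    exact (hasFDerivAt_const (1:ℝ) u).prodMk ((hasFDerivAt_id u).prodMk
      (((hBd u hu).hasFDerivAt).prodMk (((hNd u hu).hasFDerivAt).prodMk (hasFDerivAt_const (0:ℝ) u))))
  have hrD : ∀ u ∈ Ω, HasFDerivAt r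
      ((0 : (Fin n → ℝ) →L[ℝ] ℝ).prod ((fderiv ℝ f u).prod
        ((fderiv ℝ A u).prod ((fderiv ℝ M u).prod 0)))) u := by
    intro u hu
    rw [hre]
    exact (hasFDerivAt_const (0:ℝ) u).prodMk (((hfd u hu).hasFDerivAt).prodMk
      (((hAd u hu).hasFDerivAt).prodMk (((hMd u hu).hasFDerivAt).prodMk (hasFDerivAt_const (1:ℝ) u))))
  -- component derivatives of f
  have hcomp : ∀ u ∈ Ω, ∀ k v, fderiv ℝ (fun x => f x k) u v = fderiv ℝ f u v k := by
    intro u hu k v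
    have h : HasFDerivAt (fun x => f x k)
        ((ContinuousLinearMap.proj k).comp (fderiv ℝ f u)) u :=
      hasFDerivAt_pi'.mp (hfd u hu).hasFDerivAt k
    rw [h.fderiv]; rfl
  have part1 : ∀ u₀ ∈ Ω, ∀ lam₀ : ℝ, ∀ ξ : Fin n → ℝ,
      fderiv ℝ f u₀ ξ = lam₀ • ξ →
      fderiv ℝ r u₀ ξ = lam₀ • fderiv ℝ p u₀ ξ := by
    intro u hu lam₀ ξ hξ
    have hAB' : ∀ i : Fin n, fderiv ℝ A u (Pi.single i 1) =
        ∑ k, fderiv ℝ B u (Pi.single k 1) * fderiv ℝ f u (Pi.single i 1) k := by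
      intro i; rw [hAB u hu i]; congr 1; ext k; rw [hcomp u hu]
    have hMN' : ∀ i : Fin n, fderiv ℝ M u (Pi.single i 1) =
        ∑ k, fderiv ℝ N u (Pi.single k 1) * fderiv ℝ f u (Pi.single i 1) k := by
      intro i; rw [hMN u hu i]; congr 1; ext k; rw [hcomp u hu]
    have hA' := stmt11_key (fderiv ℝ f u) (fderiv ℝ A u) (fderiv ℝ B u) hAB' lam₀ ξ hξ
    have hM' := stmt11_key (fderiv ℝ f u) (fderiv ℝ M u) (fderiv ℝ N u) hMN' lam₀ ξ hξ
    rw [(hrD u hu).fderiv, (hpD u hu).fderiv]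
    simp only [ContinuousLinearMap.prod_apply, ContinuousLinearMap.zero_apply,
      ContinuousLinearMap.id_apply, Prod.smul_mk, smul_zero, smul_eq_mul, mul_zero]
    exact Prod.ext rfl (Prod.ext hξ (Prod.ext hA' (Prod.ext hM' rfl)))
  refine ⟨part1, ?_⟩
  intro lam ξ hlam hξ u hu
  have hlamd : DifferentiableAt ℝ lam u :=
    (hlam.differentiableOn one_ne_zero).differentiableAt (hΩ.mem_nhds hu)
  have hpd : DifferentiableAt ℝ p u := (hpD u hu).differentiableAt
  have hrd : DifferentiableAt ℝ r u := (hrD u hu).differentiableAt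
  have h1 := part1 u hu (lam u) (ξ u) (hξ u hu)
  rw [fderiv_fun_sub hrd (hlamd.fun_smul hpd), fderiv_fun_smul hlamd hpd]
  simp only [ContinuousLinearMap.sub_apply, ContinuousLinearMap.add_apply,
    ContinuousLinearMap.smul_apply, ContinuousLinearMap.smulRight_apply, h1]
  module
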